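/- For q ≥ 2 and w ≥ 0, the function φ_w(x) = sgn(x+w)|x+w|^q + sgn(x-w)|x-w|^q is an odd function on ℝ which is nondecreasing and convex on (0, ∞). -/

import Mathlib

open Real Set Filter Topology

private lemma cont_rpow_const (p : ℝ) (hp : 0 ≤ p) : Continuous fun x : ℝ => x ^ p := by
  rw [continuous_iff_continuousAt]
  intro x
  exact Real.continuousAt_rpow_const x p (Or.inr hp)

private lemma G_hasDerivAt (q : ℝ) (hq : 2 ≤ q) (t : ℝ) :
    HasDerivAt (fun t : ℝ => Real.sign t * |t| ^ q) (q * |t| ^ (q - 1)) t := by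
  rcases lt_trichotomy t 0 with ht | ht | ht
  · have h2 : HasDerivAt (fun x : ℝ => (-x) ^ q) (q * (-t) ^ (q - 1) * (-1)) t := by
      have := (Real.hasDerivAt_rpow_const (x := -t) (p := q)
        (Or.inl (by linarith))).comp t (hasDerivAt_neg t)
      simpa [mul_comm, Function.comp_def] using this
    have h1 : HasDerivAt (fun x : ℝ => -((-x) ^ q)) (q * |t| ^ (q - 1)) t := by
      have := h2.neg
      exact this.congr_deriv (by rw [abs_of_neg ht]; ring)
    refine h1.congr_of_eventuallyEq ?_
    filter_upwards [Iio_mem_nhds ht] with x hx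
    have hx : x < 0 := hx
    rw [Real.sign_of_neg hx, abs_of_neg hx]; ring
  · subst ht
    have hzero : q * |(0:ℝ)| ^ (q - 1) = 0 := by
      rw [abs_zero, Real.zero_rpow (by linarith)]; ring
    rw [hzero, hasDerivAt_iff_tendsto_slope]
    have hcont : Tendsto (fun x : ℝ => |x| ^ (q - 1)) (𝓝[≠] 0) (𝓝 0) := by
      have hc : ContinuousAt (fun x : ℝ => |x| ^ (q - 1)) 0 :=
        (Real.continuousAt_rpow_const (|(0:ℝ)|) (q-1) (Or.inr (by linarith))).comp
          continuous_abs.continuousAt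
      refine tendsto_nhdsWithin_of_tendsto_nhds ?_
      simpa [abs_zero, Real.zero_rpow (show q - 1 ≠ 0 by intro h; linarith),
        Function.comp] using hc.tendsto
    refine hcont.congr' ?_
    filter_upwards [self_mem_nhdsWithin] with x hx
    have hx : x ≠ 0 := hx
    have habs : |x| ^ q = |x| * |x| ^ (q - 1) := by
      rw [← Real.rpow_one_add' (abs_nonneg x) (by linarith)]
      ring_nf
    rw [slope_def_field]
    field_simp
    rw [habs, ← mul_assoc]
    rcases hx.lt_or_gt with h | h
    · rw [Real.sign_of_neg h, abs_of_neg h, Real.sign_zero]; ring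
    · rw [Real.sign_of_pos h, abs_of_pos h, Real.sign_zero]; ring
  · have h2 : HasDerivAt (fun x : ℝ => x ^ q) (q * t ^ (q - 1)) t :=
      Real.hasDerivAt_rpow_const (Or.inl (ne_of_gt ht))
    have h1 : HasDerivAt (fun x : ℝ => x ^ q) (q * |t| ^ (q - 1)) t := by
      rwa [abs_of_pos ht]
    refine h1.congr_of_eventuallyEq ?_
    filter_upwards [Ioi_mem_nhds ht] with x hx
    have hx : 0 < x := hx
    rw [Real.sign_of_pos hx, abs_of_pos hx]; ring

private lemma mono_shift (p a : ℝ) (hp : 1 ≤ p) (ha : 0 ≤ a) :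
    MonotoneOn (fun u : ℝ => (u + a) ^ p - u ^ p) (Set.Ici 0) := by
  have hder : ∀ u : ℝ, 0 < u →
      HasDerivAt (fun u : ℝ => (u + a) ^ p - u ^ p)
        (p * (u + a) ^ (p - 1) - p * u ^ (p - 1)) u := by
    intro u hu
    have h1 : HasDerivAt (fun u : ℝ => (u + a) ^ p) (p * (u + a) ^ (p - 1)) u := by
      have := (Real.hasDerivAt_rpow_const (x := u + a) (p := p)
        (Or.inl (by positivity))).comp_add_const u a
      simpa using this
    exact h1.sub (Real.hasDerivAt_rpow_const (Or.inl (ne_of_gt hu)))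
  apply monotoneOn_of_deriv_nonneg (convex_Ici 0)
  · exact (((cont_rpow_const p (by linarith)).comp (by continuity)).sub
      (cont_rpow_const p (by linarith))).continuousOn
  · intro u hu
    rw [interior_Ici] at hu
    exact (hder u hu).differentiableAt.differentiableWithinAt
  · intro u hu
    rw [interior_Ici] at hu
    rw [(hder u hu).deriv]
    have : u ^ (p - 1) ≤ (u + a) ^ (p - 1) :=
      Real.rpow_le_rpow (le_of_lt hu) (by linarith) (by linarith)
    nlinarith

private lemma key (p w : ℝ) (hp : 1 ≤ p) (hw : 0 ≤ w) :
    ∀ x y : ℝ, 0 < x → x ≤ y →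
      (x + w) ^ p + |x - w| ^ p ≤ (y + w) ^ p + |y - w| ^ p := by
  have case1 : ∀ x y : ℝ, 0 ≤ x → w ≤ x → x ≤ y →
      (x + w) ^ p + |x - w| ^ p ≤ (y + w) ^ p + |y - w| ^ p := by
    intro x y hx hwx hxy
    rw [abs_of_nonneg (by linarith), abs_of_nonneg (by linarith)]
    exact add_le_add (Real.rpow_le_rpow (by linarith) (by linarith) (by linarith))
      (Real.rpow_le_rpow (by linarith) (by linarith) (by linarith))
  have case2 : ∀ x y : ℝ, 0 ≤ x → x ≤ y → y ≤ w →
      (x + w) ^ p + |x - w| ^ p ≤ (y + w) ^ p + |y - w| ^ p := by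
    intro x y hx hxy hyw
    have := mono_shift p (y - x) hp (by linarith) (Set.mem_Ici.mpr (by linarith : (0:ℝ) ≤ w - y))
      (Set.mem_Ici.mpr (by linarith : (0:ℝ) ≤ x + w)) (by linarith)
    simp only at this
    rw [show w - y + (y - x) = w - x by ring, show x + w + (y - x) = y + w by ring] at this
    rw [abs_of_nonpos (by linarith), abs_of_nonpos (by linarith)]
    rw [show -(x - w) = w - x by ring, show -(y - w) = w - y by ring]
    linarith [this]
  intro x y hx hxy
  rcases le_total w x with hwx | hxw
  · exact case1 x y (le_of_lt hx) hwx hxy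
  · rcases le_total y w with hyw | hwy
    · exact case2 x y (le_of_lt hx) hxy hyw
    · exact le_trans (case2 x w (le_of_lt hx) hxw le_rfl)
        (case1 w y (by linarith) le_rfl hwy)

theorem stmt_0 (q w : ℝ) (hq : 2 ≤ q) (hw : 0 ≤ w)
    (φ : ℝ → ℝ)
    (hφ : ∀ x : ℝ, φ x = Real.sign (x + w) * |x + w| ^ q + Real.sign (x - w) * |x - w| ^ q) :
    (∀ x : ℝ, φ (-x) = -φ x) ∧ MonotoneOn φ (Set.Ioi 0) ∧ ConvexOn ℝ (Set.Ioi 0) φ := by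
  have hodd : ∀ x : ℝ, φ (-x) = -φ x := by
    intro x
    rw [hφ (-x), hφ x, show -x + w = -(x - w) by ring, show -x - w = -(x + w) by ring,
      Real.sign_neg, Real.sign_neg, abs_neg, abs_neg]
    ring
  have hφeq : φ = fun x => Real.sign (x + w) * |x + w| ^ q
      + Real.sign (x - w) * |x - w| ^ q := funext hφ
  have hφd : ∀ x : ℝ, HasDerivAt φ (q * |x + w| ^ (q - 1) + q * |x - w| ^ (q - 1)) x := by
    intro x
    rw [hφeq]
    exact ((G_hasDerivAt q hq (x + w)).comp_add_const x w).add
      ((G_hasDerivAt q hq (x - w)).comp_sub_const x w)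
  have hdall : Differentiable ℝ φ := fun x => (hφd x).differentiableAt
  have hcont : ContinuousOn φ (Set.Ioi 0) := hdall.continuous.continuousOn
  have hdiff : DifferentiableOn ℝ φ (interior (Set.Ioi 0)) :=
    fun x _ => (hφd x).differentiableAt.differentiableWithinAt
  have hmono : MonotoneOn φ (Set.Ioi 0) := by
    apply monotoneOn_of_deriv_nonneg (convex_Ioi 0) hcont hdiff
    intro x _
    rw [(hφd x).deriv]
    have h1 : (0:ℝ) ≤ |x + w| ^ (q - 1) := Real.rpow_nonneg (abs_nonneg _) _
    have h2 : (0:ℝ) ≤ |x - w| ^ (q - 1) := Real.rpow_nonneg (abs_nonneg _) _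
    nlinarith
  refine ⟨hodd, hmono, ?_⟩
  apply MonotoneOn.convexOn_of_deriv (convex_Ioi 0) hcont hdiff
  rw [interior_Ioi]
  intro x hx y hy hxy
  rw [(hφd x).deriv, (hφd y).deriv]
  have hx : (0:ℝ) < x := hx
  have hy : (0:ℝ) < y := hy
  have hk := key (q - 1) w (by linarith) hw x y hx hxy
  rw [abs_of_pos (show (0:ℝ) < x + w by linarith), abs_of_pos (show (0:ℝ) < y + w by linarith)]
  have h2 := mul_le_mul_of_nonneg_left hk (by linarith : (0:ℝ) ≤ q)
  ring_nf at h2 ⊢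
  linarith
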